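/- Let R = Z[c_1, c_2, c_3] / I, where I is generated by the degree 2k components of (1 + c_1 + c_2 + c_3)(1 - c_1 + c_2 - c_3) for k = 1, 2, 3 (i.e. by c_1^2 - 2c_2, c_2^2 - 2c_1c_3, c_3^2), graded by deg c_i = 2i. Then the eight monomials 1, c_1, c_2, c_3, c_1 c_2, c_1 c_3, c_2 c_3, c_1 c_2 c_3 form a Z-basis of R. -/

import Mathlib

open MvPolynomial

noncomputable def lgrIdeal : Ideal (MvPolynomial (Fin 3) ℤ) :=
  Ideal.span {X 0 ^ 2 - 2 * X 1, X 1 ^ 2 - 2 * X 0 * X 2, X 2 ^ 2}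

def nfAux : ℕ → ℕ → ℕ → Fin 8 → ℤ
  | 0,0,0 => ![1,0,0,0,0,0,0,0]
  | 1,0,0 => ![0,1,0,0,0,0,0,0]
  | 2,0,0 => ![0,0,2,0,0,0,0,0]
  | 3,0,0 => ![0,0,0,0,2,0,0,0]
  | 4,0,0 => ![0,0,0,0,0,8,0,0]
  | 5,0,0 => ![0,0,0,0,0,0,16,0]
  | 6,0,0 => ![0,0,0,0,0,0,0,16]
  | 0,1,0 => ![0,0,1,0,0,0,0,0]
  | 1,1,0 => ![0,0,0,0,1,0,0,0]
  | 2,1,0 => ![0,0,0,0,0,4,0,0]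
  | 3,1,0 => ![0,0,0,0,0,0,8,0]
  | 4,1,0 => ![0,0,0,0,0,0,0,8]
  | 0,2,0 => ![0,0,0,0,0,2,0,0]
  | 1,2,0 => ![0,0,0,0,0,0,4,0]
  | 2,2,0 => ![0,0,0,0,0,0,0,4]
  | 0,3,0 => ![0,0,0,0,0,0,0,2]
  | 0,0,1 => ![0,0,0,1,0,0,0,0]
  | 1,0,1 => ![0,0,0,0,0,1,0,0]
  | 2,0,1 => ![0,0,0,0,0,0,2,0]
  | 3,0,1 => ![0,0,0,0,0,0,0,2]
  | 0,1,1 => ![0,0,0,0,0,0,1,0]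
  | 1,1,1 => ![0,0,0,0,0,0,0,1]
  | _,_,_ => 0

def nf (a b c : ℕ) : Fin 8 → ℤ := if a + 2*b + 3*c ≤ 6 then nfAux a b c else 0

lemma nf_R1 (a b c : ℕ) : nf (a+2) b c = (2:ℤ) • nf a (b+1) c := by
  by_cases h : a + 2*b + 3*c ≤ 4
  · have ha : a ≤ 4 := by omega
    have hb : b ≤ 2 := by omega
    have hc : c ≤ 1 := by omega
    interval_cases a <;> interval_cases b <;> interval_cases c <;> decide
  · unfold nf
    rw [if_neg (by omega), if_neg (by omega)]
    simp

lemma nf_R2 (a b c : ℕ) : nf a (b+2) c = (2:ℤ) • nf (a+1) b (c+1) := by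
  by_cases h : a + 2*b + 3*c ≤ 2
  · have ha : a ≤ 2 := by omega
    have hb : b ≤ 1 := by omega
    have hc : c = 0 := by omega
    subst hc
    interval_cases a <;> interval_cases b <;> decide
  · unfold nf
    rw [if_neg (by omega), if_neg (by omega)]
    simp

lemma nf_R3 (a b c : ℕ) : nf a b (c+2) = 0 := by
  by_cases h : a + 2*b + 3*c = 0
  · have ha : a = 0 := by omega
    have hb : b = 0 := by omega
    have hc : c = 0 := by omega
    subst ha hb hc; decide
  · unfold nf
    rw [if_neg (by omega)]

noncomputable def gmap : MvPolynomial (Fin 3) ℤ →ₗ[ℤ] (Fin 8 → ℤ) :=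
  (basisMonomials (Fin 3) ℤ).constr ℤ fun d => nf (d 0) (d 1) (d 2)

lemma gmap_monomial (d : Fin 3 →₀ ℕ) (a : ℤ) :
    gmap (monomial d a) = a • nf (d 0) (d 1) (d 2) := by
  have h1 : (monomial d a : MvPolynomial (Fin 3) ℤ) = a • monomial d 1 := by
    rw [smul_monomial]; norm_num
  have h2 : (monomial d (1:ℤ)) = basisMonomials (Fin 3) ℤ d := by
    rw [coe_basisMonomials]
  rw [h1, map_smul, h2, gmap, Module.Basis.constr_basis]

lemma X_eq_monomial (i : Fin 3) : (X i : MvPolynomial (Fin 3) ℤ) = monomial (Finsupp.single i 1) 1 := by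
  rw [← pow_one (X i), X_pow_eq_monomial]

lemma two_X (i : Fin 3) : (2 : MvPolynomial (Fin 3) ℤ) * X i = monomial (Finsupp.single i 1) 2 := by
  have h : (2 : MvPolynomial (Fin 3) ℤ) = C 2 := by norm_num
  rw [h, X_eq_monomial, C_mul_monomial, mul_one]

lemma mk_zsmul (a : ℤ) (x : MvPolynomial (Fin 3) ℤ) :
    Ideal.Quotient.mk lgrIdeal (a • x) = a • Ideal.Quotient.mk lgrIdeal x :=
  map_zsmul (Ideal.Quotient.mk lgrIdeal).toAddMonoidHom a x

lemma gmap_vanish {p : MvPolynomial (Fin 3) ℤ} (hp : p ∈ lgrIdeal) : gmap p = 0 := by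
  have key : ∀ r ∈ ({X 0 ^ 2 - 2 * X 1, X 1 ^ 2 - 2 * X 0 * X 2, X 2 ^ 2} :
      Set (MvPolynomial (Fin 3) ℤ)), ∀ q : MvPolynomial (Fin 3) ℤ, gmap (q * r) = 0 := by
    intro r hr q
    induction q using MvPolynomial.induction_on' with
    | add p q hp hq => rw [add_mul, map_add, hp, hq, add_zero]
    | monomial u a =>
      simp only [Set.mem_insert_iff, Set.mem_singleton_iff] at hr
      rcases hr with rfl | rfl | rfl
      · have e1 : (monomial u a : MvPolynomial (Fin 3) ℤ) * (X 0 ^ 2 - 2 * X 1)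
            = monomial (u + Finsupp.single 0 2 : Fin 3 →₀ ℕ) a - monomial (u + Finsupp.single 1 1 : Fin 3 →₀ ℕ) (a*2) := by
          rw [mul_sub, X_pow_eq_monomial, monomial_mul, two_X, monomial_mul, mul_one]
        have h0 : (u + Finsupp.single 0 2 : Fin 3 →₀ ℕ) 0 = u 0 + 2 := by simp
        have h1 : (u + Finsupp.single 0 2 : Fin 3 →₀ ℕ) 1 = u 1 := by simp [Finsupp.single_apply]
        have h2 : (u + Finsupp.single 0 2 : Fin 3 →₀ ℕ) 2 = u 2 := by simp [Finsupp.single_apply]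
        have h3 : (u + Finsupp.single 1 1 : Fin 3 →₀ ℕ) 0 = u 0 := by simp [Finsupp.single_apply]
        have h4 : (u + Finsupp.single 1 1 : Fin 3 →₀ ℕ) 1 = u 1 + 1 := by simp
        have h5 : (u + Finsupp.single 1 1 : Fin 3 →₀ ℕ) 2 = u 2 := by simp [Finsupp.single_apply]
        rw [e1, map_sub, gmap_monomial, gmap_monomial, h0, h1, h2, h3, h4, h5,
          nf_R1, smul_smul]
        exact sub_self _
      · have e2 : (monomial u a : MvPolynomial (Fin 3) ℤ) * (X 1 ^ 2 - 2 * X 0 * X 2)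
            = monomial (u + Finsupp.single 1 2 : Fin 3 →₀ ℕ) a
              - monomial (u + (Finsupp.single 0 1 + Finsupp.single 2 1) : Fin 3 →₀ ℕ) (a*2) := by
          rw [mul_sub, X_pow_eq_monomial, monomial_mul, two_X, X_eq_monomial 2, monomial_mul,
            monomial_mul, mul_one, mul_one]
        have h0 : (u + Finsupp.single 1 2 : Fin 3 →₀ ℕ) 0 = u 0 := by simp [Finsupp.single_apply]
        have h1 : (u + Finsupp.single 1 2 : Fin 3 →₀ ℕ) 1 = u 1 + 2 := by simp
        have h2 : (u + Finsupp.single 1 2 : Fin 3 →₀ ℕ) 2 = u 2 := by simp [Finsupp.single_apply]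
        have h3 : (u + (Finsupp.single 0 1 + Finsupp.single 2 1) : Fin 3 →₀ ℕ) 0 = u 0 + 1 := by
          simp [Finsupp.single_apply]
        have h4 : (u + (Finsupp.single 0 1 + Finsupp.single 2 1) : Fin 3 →₀ ℕ) 1 = u 1 := by
          simp [Finsupp.single_apply]
        have h5 : (u + (Finsupp.single 0 1 + Finsupp.single 2 1) : Fin 3 →₀ ℕ) 2 = u 2 + 1 := by
          simp [Finsupp.single_apply]
        rw [e2, map_sub, gmap_monomial, gmap_monomial, h0, h1, h2, h3, h4, h5,
          nf_R2, smul_smul]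
        exact sub_self _
      · have e3 : (monomial u a : MvPolynomial (Fin 3) ℤ) * (X 2 ^ 2)
            = monomial (u + Finsupp.single 2 2 : Fin 3 →₀ ℕ) a := by
          rw [X_pow_eq_monomial, monomial_mul, mul_one]
        have h0 : (u + Finsupp.single 2 2 : Fin 3 →₀ ℕ) 0 = u 0 := by simp [Finsupp.single_apply]
        have h1 : (u + Finsupp.single 2 2 : Fin 3 →₀ ℕ) 1 = u 1 := by simp [Finsupp.single_apply]
        have h2 : (u + Finsupp.single 2 2 : Fin 3 →₀ ℕ) 2 = u 2 + 2 := by simp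
        rw [e3, gmap_monomial, h0, h1, h2, nf_R3, smul_zero]
  have main : ∀ q : MvPolynomial (Fin 3) ℤ, gmap (q * p) = 0 := by
    refine Submodule.span_induction (p := fun x _ => ∀ q, gmap (q * x) = 0)
      (fun y hy q => key y hy q) (by simp) ?_ ?_ hp
    · intro y z _ _ hy hz q
      rw [mul_add, map_add, hy q, hz q, add_zero]
    · intro a y _ hy q
      rw [smul_eq_mul, ← mul_assoc, hy]
  simpa using main 1

noncomputable def bb : Fin 8 → (MvPolynomial (Fin 3) ℤ ⧸ lgrIdeal) := fun i =>
  Ideal.Quotient.mk lgrIdeal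
    (![1, X 0, X 1, X 2, X 0 * X 1, X 0 * X 2, X 1 * X 2, X 0 * X 1 * X 2] i)

lemma bb0 : bb 0 = Ideal.Quotient.mk lgrIdeal 1 := rfl
lemma bb1 : bb 1 = Ideal.Quotient.mk lgrIdeal (X 0) := rfl
lemma bb2 : bb 2 = Ideal.Quotient.mk lgrIdeal (X 1) := rfl
lemma bb3 : bb 3 = Ideal.Quotient.mk lgrIdeal (X 2) := rfl
lemma bb4 : bb 4 = Ideal.Quotient.mk lgrIdeal (X 0 * X 1) := rfl
lemma bb5 : bb 5 = Ideal.Quotient.mk lgrIdeal (X 0 * X 2) := rfl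
lemma bb6 : bb 6 = Ideal.Quotient.mk lgrIdeal (X 1 * X 2) := rfl
lemma bb7 : bb 7 = Ideal.Quotient.mk lgrIdeal (X 0 * X 1 * X 2) := rfl

lemma gmap_pow (a b c : ℕ) : gmap (X 0 ^ a * X 1 ^ b * X 2 ^ c) = nf a b c := by
  rw [X_pow_eq_monomial, X_pow_eq_monomial, X_pow_eq_monomial, monomial_mul, monomial_mul,
    mul_one, mul_one, gmap_monomial, one_smul]
  simp [Finsupp.single_apply]

lemma mk_pow_base (a b c : ℕ) (ha : a ≤ 1) (hb : b ≤ 1) :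
    Ideal.Quotient.mk lgrIdeal (X 0 ^ a * X 1 ^ b * X 2 ^ c)
      = ∑ i, nf a b c i • bb i := by
  rcases Nat.lt_or_ge c 2 with hc | hc
  · have hc' : c ≤ 1 := by omega
    interval_cases a <;> interval_cases b <;> interval_cases c
    · rw [Fin.sum_univ_eight, show nf 0 0 0 = Pi.single 0 1 from by decide]
      simp [Pi.single_apply, bb0, bb1, bb2, bb3, bb4, bb5, bb6, bb7]
    · rw [Fin.sum_univ_eight, show nf 0 0 1 = Pi.single 3 1 from by decide]
      simp [Pi.single_apply, bb0, bb1, bb2, bb3, bb4, bb5, bb6, bb7]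
    · rw [Fin.sum_univ_eight, show nf 0 1 0 = Pi.single 2 1 from by decide]
      simp [Pi.single_apply, bb0, bb1, bb2, bb3, bb4, bb5, bb6, bb7]
    · rw [Fin.sum_univ_eight, show nf 0 1 1 = Pi.single 6 1 from by decide]
      simp [Pi.single_apply, bb0, bb1, bb2, bb3, bb4, bb5, bb6, bb7]
    · rw [Fin.sum_univ_eight, show nf 1 0 0 = Pi.single 1 1 from by decide]
      simp [Pi.single_apply, bb0, bb1, bb2, bb3, bb4, bb5, bb6, bb7]
    · rw [Fin.sum_univ_eight, show nf 1 0 1 = Pi.single 5 1 from by decide]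
      simp [Pi.single_apply, bb0, bb1, bb2, bb3, bb4, bb5, bb6, bb7]
    · rw [Fin.sum_univ_eight, show nf 1 1 0 = Pi.single 4 1 from by decide]
      simp [Pi.single_apply, bb0, bb1, bb2, bb3, bb4, bb5, bb6, bb7]
    · rw [Fin.sum_univ_eight, show nf 1 1 1 = Pi.single 7 1 from by decide]
      simp [Pi.single_apply, bb0, bb1, bb2, bb3, bb4, bb5, bb6, bb7]
  · obtain ⟨c', rfl⟩ : ∃ c', c = c' + 2 := ⟨c - 2, by omega⟩
    rw [nf_R3]
    simp only [Pi.zero_apply, zero_smul, Finset.sum_const_zero]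
    rw [Ideal.Quotient.eq_zero_iff_mem]
    have : (X 0 ^ a * X 1 ^ b * X 2 ^ (c'+2) : MvPolynomial (Fin 3) ℤ)
        = (X 0 ^ a * X 1 ^ b * X 2 ^ c') * X 2 ^ 2 := by ring
    rw [this]
    exact Ideal.mul_mem_left _ _ (Ideal.subset_span (by simp))

lemma mk_pow_nf : ∀ (n a b c : ℕ), a + b ≤ n →
    Ideal.Quotient.mk lgrIdeal (X 0 ^ a * X 1 ^ b * X 2 ^ c)
      = ∑ i, nf a b c i • bb i := by
  intro n
  induction n with
  | zero =>
    intro a b c h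
    exact mk_pow_base a b c (by omega) (by omega)
  | succ n IH =>
    intro a b c h
    rcases Nat.lt_or_ge a 2 with ha | ha
    · rcases Nat.lt_or_ge b 2 with hb | hb
      · exact mk_pow_base a b c (by omega) (by omega)
      · obtain ⟨b', rfl⟩ : ∃ b', b = b' + 2 := ⟨b - 2, by omega⟩
        have hrel : Ideal.Quotient.mk lgrIdeal (X 1 ^ 2)
            = Ideal.Quotient.mk lgrIdeal (2 * X 0 * X 2) := by
          rw [Ideal.Quotient.mk_eq_mk_iff_sub_mem]
          exact Ideal.subset_span (by simp)
        have e : (X 0 ^ a * X 1 ^ (b'+2) * X 2 ^ c : MvPolynomial (Fin 3) ℤ)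
            = X 1 ^ 2 * (X 0 ^ a * X 1 ^ b' * X 2 ^ c) := by ring
        have e2 : (2 * X 0 * X 2 * (X 0 ^ a * X 1 ^ b' * X 2 ^ c) : MvPolynomial (Fin 3) ℤ)
            = (2:ℤ) • (X 0 ^ (a+1) * X 1 ^ b' * X 2 ^ (c+1)) := by
          rw [zsmul_eq_mul]; push_cast; ring
        rw [e, map_mul, hrel, ← map_mul, e2, mk_zsmul,
          IH (a+1) b' (c+1) (by omega), nf_R2, Finset.smul_sum]
        exact Finset.sum_congr rfl fun i _ => by rw [Pi.smul_apply, smul_assoc]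
    · obtain ⟨a', rfl⟩ : ∃ a', a = a' + 2 := ⟨a - 2, by omega⟩
      have hrel : Ideal.Quotient.mk lgrIdeal (X 0 ^ 2)
          = Ideal.Quotient.mk lgrIdeal (2 * X 1) := by
        rw [Ideal.Quotient.mk_eq_mk_iff_sub_mem]
        exact Ideal.subset_span (by simp)
      have e : (X 0 ^ (a'+2) * X 1 ^ b * X 2 ^ c : MvPolynomial (Fin 3) ℤ)
          = X 0 ^ 2 * (X 0 ^ a' * X 1 ^ b * X 2 ^ c) := by ring
      have e2 : (2 * X 1 * (X 0 ^ a' * X 1 ^ b * X 2 ^ c) : MvPolynomial (Fin 3) ℤ)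
          = (2:ℤ) • (X 0 ^ a' * X 1 ^ (b+1) * X 2 ^ c) := by
        rw [zsmul_eq_mul]; push_cast; ring
      rw [e, map_mul, hrel, ← map_mul, e2, mk_zsmul,
        IH a' (b+1) c (by omega), nf_R1, Finset.smul_sum]
      exact Finset.sum_congr rfl fun i _ => by rw [Pi.smul_apply, smul_assoc]

lemma mk_pow (a b c : ℕ) :
    Ideal.Quotient.mk lgrIdeal (X 0 ^ a * X 1 ^ b * X 2 ^ c)
      = ∑ i, nf a b c i • bb i := mk_pow_nf (a+b) a b c le_rfl

lemma bb_indep : LinearIndependent ℤ bb := by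
  rw [Fintype.linearIndependent_iff]
  intro g hg
  set M : Fin 8 → MvPolynomial (Fin 3) ℤ :=
    ![1, X 0, X 1, X 2, X 0 * X 1, X 0 * X 2, X 1 * X 2, X 0 * X 1 * X 2] with hM
  have hmem : (∑ j, g j • M j) ∈ lgrIdeal := by
    rw [← Ideal.Quotient.eq_zero_iff_mem, map_sum]
    have heach : ∀ j, Ideal.Quotient.mk lgrIdeal (g j • M j) = g j • bb j := by
      intro j
      rw [mk_zsmul]
      rfl
    rw [Finset.sum_congr rfl fun j _ => heach j]
    exact hg
  have h2 := gmap_vanish hmem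
  rw [map_sum] at h2
  simp only [map_smul] at h2
  have hg0 : gmap (M 0) = nf 0 0 0 := by
    rw [show M 0 = X 0 ^ 0 * X 1 ^ 0 * X 2 ^ 0 by rw [show M 0 = 1 from rfl]; ring, gmap_pow]
  have hg1 : gmap (M 1) = nf 1 0 0 := by
    rw [show M 1 = X 0 ^ 1 * X 1 ^ 0 * X 2 ^ 0 by rw [show M 1 = X 0 from rfl]; ring, gmap_pow]
  have hg2 : gmap (M 2) = nf 0 1 0 := by
    rw [show M 2 = X 0 ^ 0 * X 1 ^ 1 * X 2 ^ 0 by rw [show M 2 = X 1 from rfl]; ring, gmap_pow]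
  have hg3 : gmap (M 3) = nf 0 0 1 := by
    rw [show M 3 = X 0 ^ 0 * X 1 ^ 0 * X 2 ^ 1 by rw [show M 3 = X 2 from rfl]; ring, gmap_pow]
  have hg4 : gmap (M 4) = nf 1 1 0 := by
    rw [show M 4 = X 0 ^ 1 * X 1 ^ 1 * X 2 ^ 0 by rw [show M 4 = X 0 * X 1 from rfl]; ring, gmap_pow]
  have hg5 : gmap (M 5) = nf 1 0 1 := by
    rw [show M 5 = X 0 ^ 1 * X 1 ^ 0 * X 2 ^ 1 by rw [show M 5 = X 0 * X 2 from rfl]; ring, gmap_pow]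
  have hg6 : gmap (M 6) = nf 0 1 1 := by
    rw [show M 6 = X 0 ^ 0 * X 1 ^ 1 * X 2 ^ 1 by rw [show M 6 = X 1 * X 2 from rfl]; ring, gmap_pow]
  have hg7 : gmap (M 7) = nf 1 1 1 := by
    rw [show M 7 = X 0 ^ 1 * X 1 ^ 1 * X 2 ^ 1 by rw [show M 7 = X 0 * X 1 * X 2 from rfl]; ring, gmap_pow]
  rw [Fin.sum_univ_eight, hg0, hg1, hg2, hg3, hg4, hg5, hg6, hg7,
    show nf 0 0 0 = Pi.single 0 1 from by decide,
    show nf 1 0 0 = Pi.single 1 1 from by decide,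
    show nf 0 1 0 = Pi.single 2 1 from by decide,
    show nf 0 0 1 = Pi.single 3 1 from by decide,
    show nf 1 1 0 = Pi.single 4 1 from by decide,
    show nf 1 0 1 = Pi.single 5 1 from by decide,
    show nf 0 1 1 = Pi.single 6 1 from by decide,
    show nf 1 1 1 = Pi.single 7 1 from by decide] at h2
  intro i
  have hi := congrFun h2 i
  fin_cases i <;> simp [Pi.single_apply] at hi <;> simpa using hi

lemma bb_span : ⊤ ≤ Submodule.span ℤ (Set.range bb) := by
  rintro x -
  obtain ⟨p, rfl⟩ := Ideal.Quotient.mk_surjective x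
  induction p using MvPolynomial.induction_on' with
  | add p q hp hq =>
    rw [map_add]
    exact Submodule.add_mem _ hp hq
  | monomial u a =>
    have hu : (Finsupp.single (0:Fin 3) (u 0) + Finsupp.single 1 (u 1) + Finsupp.single 2 (u 2)) = u := by
      ext i
      fin_cases i <;> simp [Finsupp.single_apply]
    have decomp : (monomial u a : MvPolynomial (Fin 3) ℤ)
        = a • (X 0 ^ (u 0) * X 1 ^ (u 1) * X 2 ^ (u 2)) := by
      rw [X_pow_eq_monomial, X_pow_eq_monomial, X_pow_eq_monomial, monomial_mul, monomial_mul,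
        mul_one, mul_one, smul_monomial, smul_eq_mul, mul_one, hu]
    rw [decomp, mk_zsmul]
    refine Submodule.smul_mem _ _ ?_
    rw [mk_pow]
    exact Submodule.sum_mem _ fun i _ =>
      Submodule.smul_mem _ _ (Submodule.subset_span ⟨i, rfl⟩)

theorem stmt_12 :
    ∃ b : Module.Basis (Fin 8) ℤ (MvPolynomial (Fin 3) ℤ ⧸ lgrIdeal),
      ∀ i : Fin 8, b i = Ideal.Quotient.mk lgrIdeal
        (![1, X 0, X 1, X 2, X 0 * X 1, X 0 * X 2, X 1 * X 2, X 0 * X 1 * X 2] i) := by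
  refine ⟨Module.Basis.mk bb_indep bb_span, fun i => ?_⟩
  rw [Module.Basis.mk_apply]
  rfl
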